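/- Let a ∈ ℂ[X] be a nonzero polynomial and k ∈ ℤ such that λ^{−k}·a(λ) is a nonnegative real number for every λ ∈ ℂ with |λ| = 1. Then every root of a lying on the unit circle has even multiplicity. -/

import Mathlib

open Polynomial Filter Topology

/-- If `a ∈ ℂ[X]` is nonzero and `λ⁻ᵏ·a(λ)` is a nonnegative real number for
every `λ` on the unit circle, then every root of `a` on the unit circle has
even multiplicity. -/
theorem stmt_14 (a : ℂ[X]) (ha : a ≠ 0) (k : ℤ)
    (h : ∀ l : ℂ, ‖l‖ = 1 → ∃ r : ℝ, 0 ≤ r ∧ a.eval l = (r : ℂ) * l ^ k) :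
    ∀ z : ℂ, ‖z‖ = 1 → a.IsRoot z → Even (rootMultiplicity z a) := by
  intro z hz hroot
  by_contra hodd
  rw [Nat.not_even_iff_odd] at hodd
  set m := rootMultiplicity z a with hm
  set b := a /ₘ (X - C z) ^ m with hbdef
  have hfact : (X - C z) ^ m * b = a := a.pow_mul_divByMonic_rootMultiplicity_eq z
  have hbz : b.eval z ≠ 0 := Polynomial.eval_divByMonic_pow_rootMultiplicity_ne_zero z ha
  have hz0 : z ≠ 0 := by
    intro h0; rw [h0] at hz; simp at hz
  set L : ℝ → ℂ := fun θ => z * Complex.exp (θ * Complex.I) with hL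
  have habsL : ∀ θ, ‖L θ‖ = 1 := by
    intro θ
    simp [hL, map_mul, hz, Complex.norm_exp]
  have hLne : ∀ θ, L θ ≠ 0 := by
    intro θ h0
    have := habsL θ
    rw [h0] at this; simp at this
  have hL0 : L 0 = z := by simp [hL]
  set S : ℝ → ℂ := fun θ => (θ : ℂ)⁻¹ * (Complex.exp (θ * Complex.I) - 1) with hS
  -- the limit (exp w - 1)/w → 1 as w → 0
  have hT : Tendsto (fun w : ℂ => w⁻¹ * (Complex.exp w - 1)) (𝓝[≠] (0 : ℂ))
      (𝓝 1) := by
    have hd : HasDerivAt Complex.exp 1 0 := by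
      simpa using Complex.hasDerivAt_exp 0
    have := hasDerivAt_iff_tendsto_slope.mp hd
    refine this.congr fun w => ?_
    simp [slope, Complex.exp_zero, smul_eq_mul]
  have hmapI : Tendsto (fun θ : ℝ => (θ : ℂ) * Complex.I) (𝓝[≠] (0 : ℝ))
      (𝓝[≠] (0 : ℂ)) := by
    apply Tendsto.inf
    · have hc : Continuous fun θ : ℝ => (θ : ℂ) * Complex.I := by continuity
      exact hc.tendsto' 0 0 (by simp)
    · refine tendsto_principal_principal.2 fun θ hθ => ?_
      simp only [Set.mem_compl_iff, Set.mem_singleton_iff] at hθ ⊢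
      intro h0
      rcases mul_eq_zero.mp h0 with h1 | h1
      · exact hθ (by exact_mod_cast h1)
      · exact Complex.I_ne_zero h1
  have hStend : Tendsto S (𝓝[≠] (0 : ℝ)) (𝓝 Complex.I) := by
    have := (hT.comp hmapI).const_mul Complex.I
    rw [mul_one] at this
    refine this.congr fun θ => ?_
    simp only [hS, Function.comp]
    by_cases hθ : (θ : ℂ) = 0
    · simp [hθ]
    · field_simp
  set G : ℝ → ℂ := fun θ => z ^ m * S θ ^ m * b.eval (L θ) * L θ ^ (-k) with hG
  set w : ℂ := z ^ m * Complex.I ^ m * b.eval z * z ^ (-k) with hw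
  have hGtend : Tendsto G (𝓝[≠] (0 : ℝ)) (𝓝 w) := by
    have hLc : Tendsto L (𝓝[≠] (0 : ℝ)) (𝓝 z) := by
      have : Continuous L := by continuity
      exact (this.tendsto' 0 z hL0).mono_left nhdsWithin_le_nhds
    have hbc : Tendsto (fun θ => b.eval (L θ)) (𝓝[≠] (0 : ℝ)) (𝓝 (b.eval z)) :=
      (b.continuous_aeval.continuousAt.tendsto.comp hLc)
    have hzp : Tendsto (fun θ => L θ ^ (-k)) (𝓝[≠] (0 : ℝ)) (𝓝 (z ^ (-k))) :=
      ((continuousAt_zpow₀ z (-k) (Or.inl hz0)).tendsto.comp hLc)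
    exact ((tendsto_const_nhds.mul (hStend.pow m)).mul hbc).mul hzp
  -- per-θ identity
  have hident : ∀ θ : ℝ, θ ≠ 0 → ∃ r : ℝ, 0 ≤ r ∧ G θ = ((r / θ ^ m : ℝ) : ℂ) := by
    intro θ hθ
    obtain ⟨r, hr, heq⟩ := h (L θ) (habsL θ)
    refine ⟨r, hr, ?_⟩
    have hθC : (θ : ℂ) ≠ 0 := by exact_mod_cast hθ
    have h1 : z * (Complex.exp (θ * Complex.I) - 1) = L θ - z := by
      simp [hL]; ring
    have h2 : z ^ m * S θ ^ m = ((θ : ℂ)⁻¹) ^ m * (L θ - z) ^ m := by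
      rw [← h1, hS]
      simp only [mul_pow]
      ring
    have heval : a.eval (L θ) = (L θ - z) ^ m * b.eval (L θ) := by
      rw [← hfact]
      simp [eval_mul, eval_pow]
    have hpowk : L θ ^ k * L θ ^ (-k) = 1 := by
      rw [← zpow_add₀ (hLne θ)]
      simp
    have : G θ = ((θ : ℂ)⁻¹) ^ m * (r : ℂ) := by
      rw [hG]
      simp only
      rw [h2, mul_assoc _ ((L θ - z) ^ m) _, ← heval, heq, mul_assoc, mul_assoc,
        hpowk, mul_one]
    rw [this]
    push_cast
    rw [div_eq_mul_inv]
    ring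
  -- imaginary part of w is zero
  have hIm : w.im = 0 := by
    have h1 : Tendsto (fun θ => (G θ).im) (𝓝[≠] (0 : ℝ)) (𝓝 w.im) :=
      (Complex.continuous_im.continuousAt.tendsto.comp hGtend)
    have h2 : Tendsto (fun θ => (G θ).im) (𝓝[≠] (0 : ℝ)) (𝓝 0) := by
      refine Tendsto.congr' ?_ tendsto_const_nhds
      filter_upwards [self_mem_nhdsWithin] with θ hθ
      obtain ⟨r, _, hGθ⟩ := hident θ hθ
      rw [hGθ, Complex.ofReal_im]
    exact tendsto_nhds_unique h1 h2
  have hle : 𝓝[>] (0 : ℝ) ≤ 𝓝[≠] (0 : ℝ) :=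
    nhdsWithin_mono _ fun x hx => ne_of_gt hx
  have hle' : 𝓝[<] (0 : ℝ) ≤ 𝓝[≠] (0 : ℝ) :=
    nhdsWithin_mono _ fun x hx => ne_of_lt hx
  have hRe1 : 0 ≤ w.re := by
    have h1 : Tendsto (fun θ => (G θ).re) (𝓝[>] (0 : ℝ)) (𝓝 w.re) :=
      (Complex.continuous_re.continuousAt.tendsto.comp (hGtend.mono_left hle))
    refine ge_of_tendsto h1 ?_
    filter_upwards [self_mem_nhdsWithin] with θ hθ
    obtain ⟨r, hr, hGθ⟩ := hident θ (ne_of_gt hθ)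
    rw [hGθ, Complex.ofReal_re]
    have hθ' : (0:ℝ) < θ := hθ
    positivity
  have hRe2 : w.re ≤ 0 := by
    have h1 : Tendsto (fun θ => (G θ).re) (𝓝[<] (0 : ℝ)) (𝓝 w.re) :=
      (Complex.continuous_re.continuousAt.tendsto.comp (hGtend.mono_left hle'))
    refine le_of_tendsto h1 ?_
    filter_upwards [self_mem_nhdsWithin] with θ hθ
    obtain ⟨r, hr, hGθ⟩ := hident θ (ne_of_lt hθ)
    rw [hGθ, Complex.ofReal_re]
    have hpow : θ ^ m < 0 := hodd.pow_neg hθ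
    exact div_nonpos_of_nonneg_of_nonpos hr hpow.le
  have hw0 : w = 0 := by
    apply Complex.ext
    · exact le_antisymm hRe2 hRe1
    · simpa using hIm
  have hwne : w ≠ 0 := by
    rw [hw]
    apply mul_ne_zero
    apply mul_ne_zero
    apply mul_ne_zero
    · exact pow_ne_zero _ hz0
    · exact pow_ne_zero _ Complex.I_ne_zero
    · exact hbz
    · exact zpow_ne_zero _ hz0
  exact hwne hw0
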